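/- arXiv:1508.06072 — 4 statements merged into one kernel-verified Lean document; each statement's English description precedes it below -/
import Mathlib

section
/- Let R′ > R > 1 and let f be holomorphic on Ω_{R′} with Faber coefficients (a_n). Then for every r with 1 < r < R and every n ≥ 1, the counterclockwise circle integrals satisfy ∫_{|w|=R} conj(f(Φ⁻¹(w)))·w^{n−1} dw − ∫_{|w|=r} conj(f(Φ⁻¹(w)))·w^{n−1} dw = 2πi·conj(a_n)·(R^{2n} − r^{2n}). -/
open Complex Filter Set Metric

noncomputable section

/-- Sup-norm of `g` over the set `L`. -/
def supNorm (g : ℂ → ℂ) (L : Set ℂ) : ℝ :=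
  sSup ((fun z => ‖g z‖) '' L)

/-- A continuum: a compact connected set with at least two points whose complement
in the Riemann sphere (one-point compactification of `ℂ`) is simply connected. -/
def IsContinuum (K : Set ℂ) : Prop :=
  IsCompact K ∧ IsConnected K ∧ K.Nontrivial ∧
  SimplyConnectedSpace ↥((OnePoint.some '' K)ᶜ : Set (OnePoint ℂ))

/-- Exterior Riemann map for `K`, normalized at infinity with derivative `γ > 0`. -/
def IsExtRiemannMap (K : Set ℂ) (Φ : ℂ → ℂ) (γ : ℝ) : Prop :=
  0 < γ ∧ DifferentiableOn ℂ Φ Kᶜ ∧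
  Set.BijOn Φ Kᶜ {w : ℂ | 1 < ‖w‖} ∧
  Tendsto (fun z => Φ z / z) (Bornology.cobounded ℂ) (nhds (γ : ℂ))

/-- The Faber polynomials of `K` (relative to the exterior map `Φ`). -/
def IsFaberFamily (Φ : ℂ → ℂ) (F : ℕ → Polynomial ℂ) : Prop :=
  ∀ n : ℕ, (F n).degree = (n : ℕ) ∧
    Tendsto (fun z => Φ z ^ n - (F n).eval z) (Bornology.cobounded ℂ) (nhds 0)

/-- The Green level set `Ω_R`. -/
def greenLevel (K : Set ℂ) (Φ : ℂ → ℂ) (R : ℝ) : Set ℂ :=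
  K ∪ {z | z ∉ K ∧ ‖Φ z‖ < R}

/-- `f` has Faber coefficients `a`: the series `∑ aₙ Fₙ` converges to `f`
uniformly on compact subsets of `Ω`. -/
def HasFaberExpansion (F : ℕ → Polynomial ℂ) (Ω : Set ℂ) (f : ℂ → ℂ) (a : ℕ → ℂ) : Prop :=
  ∀ L : Set ℂ, L ⊆ Ω → IsCompact L →
    TendstoUniformlyOn (fun N z => ∑ n ∈ Finset.range N, a n * (F n).eval z) f atTop L

/-- The set of radii `R > 1` exhibiting the Bohr phenomenon for the Faber-Green condenser. -/
def bohrSet (K : Set ℂ) (Φ : ℂ → ℂ) (F : ℕ → Polynomial ℂ) : Set ℝ :=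
  {R : ℝ | 1 < R ∧ ∀ f : ℂ → ℂ, ∀ a : ℕ → ℂ,
    DifferentiableOn ℂ f (greenLevel K Φ R) →
    (∀ z ∈ greenLevel K Φ R, ‖f z‖ < 1) →
    HasFaberExpansion F (greenLevel K Φ R) f a →
    Summable (fun n => ‖a n‖ * supNorm (fun z => (F n).eval z) K) ∧
      ∑' n, ‖a n‖ * supNorm (fun z => (F n).eval z) K < 1}

/-- The Bohr radius of the Faber-Green condenser. -/
def bohrRadius (K : Set ℂ) (Φ : ℂ → ℂ) (F : ℕ → Polynomial ℂ) : ℝ :=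
  sInf (bohrSet K Φ F)


open MeasureTheory

lemma integral_conj' (f : ℝ → ℂ) (a b : ℝ) :
    (∫ x in a..b, (starRingEnd ℂ) (f x)) = (starRingEnd ℂ) (∫ x in a..b, f x) := by
  simp only [intervalIntegral, ← integral_conj, map_sub]

/-- Reflection identity for circle integrals of conjugates. -/
lemma reflect (ρ : ℝ) (hρ : 0 < ρ) (φ : ℂ → ℂ) (n : ℕ) (hn : 1 ≤ n) :
    (∮ w in C(0, ρ), (starRingEnd ℂ) (φ w) * w ^ (n - 1)) =
      -(ρ:ℂ)^(2*n) * (starRingEnd ℂ) (∮ u in C(0, ρ), φ u * ((u:ℂ)^(n+1))⁻¹) := by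
  obtain ⟨k, rfl⟩ : ∃ k, n = k + 1 := ⟨n - 1, (Nat.succ_pred_eq_of_pos hn).symm⟩
  simp only [circleIntegral, deriv_circleMap, smul_eq_mul]
  rw [← integral_conj', ← intervalIntegral.integral_const_mul]
  refine intervalIntegral.integral_congr fun θ _ => ?_
  set z := circleMap 0 ρ θ with hzdef
  have hz : z ≠ 0 := circleMap_ne_center (ne_of_gt hρ)
  have hzc : (starRingEnd ℂ) z ≠ 0 := by simpa using hz
  have key : (starRingEnd ℂ) z * z = (ρ:ℂ)^2 := by
    rw [mul_comm, Complex.mul_conj]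
    norm_cast
    rw [Complex.normSq_eq_norm_sq, norm_circleMap_zero, abs_of_pos hρ]
  have hpow : ((ρ:ℂ))^(2*(k+1)) = ((starRingEnd ℂ) z)^(k+1) * z^(k+1) := by
    rw [pow_mul, ← key, mul_pow]
  simp only [map_mul, map_inv₀, map_pow, Complex.conj_I, Nat.add_sub_cancel]
  rw [hpow]
  have hzck : ((starRingEnd ℂ) z)^(k+1+1) ≠ 0 := pow_ne_zero _ hzc
  field_simp
  ring

/-- An injective holomorphic map on an open set is open at every point. -/
lemma nhds_le_map_of_injOn {s : Set ℂ} (hs : IsOpen s) {Φ : ℂ → ℂ}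
    (hd : DifferentiableOn ℂ Φ s) (hinj : Set.InjOn Φ s) {z₀ : ℂ} (hz : z₀ ∈ s) :
    nhds (Φ z₀) ≤ Filter.map Φ (nhds z₀) := by
  have ha : AnalyticAt ℂ Φ z₀ := hd.analyticAt (hs.mem_nhds hz)
  rcases ha.eventually_constant_or_nhds_le_map_nhds with h | h
  · exfalso
    have hmem : ∀ᶠ z in nhds z₀, z ∈ s := hs.mem_nhds hz
    have h2 : ∀ᶠ z in nhdsWithin z₀ {z₀}ᶜ, (Φ z = Φ z₀ ∧ z ∈ s) ∧ z ∈ ({z₀}ᶜ : Set ℂ) :=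
      (((h.and hmem).filter_mono nhdsWithin_le_nhds).and eventually_mem_nhdsWithin)
    obtain ⟨z, ⟨hΦz, hzs⟩, hne⟩ := h2.exists
    exact hne (hinj hzs hz hΦz)
  · exact h

lemma isOpen_image_of_injOn {s : Set ℂ} (hs : IsOpen s) {Φ : ℂ → ℂ}
    (hd : DifferentiableOn ℂ Φ s) (hinj : Set.InjOn Φ s) {U : Set ℂ} (hU : IsOpen U)
    (hUs : U ⊆ s) : IsOpen (Φ '' U) := by
  rw [isOpen_iff_mem_nhds]
  rintro x ⟨z, hzU, rfl⟩
  have h := nhds_le_map_of_injOn hs hd hinj (hUs hzU)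
  exact h (image_mem_map (hU.mem_nhds hzU))

/-- An injective holomorphic map on an open set has nonvanishing derivative. -/
lemma deriv_ne_zero_of_injOn {s : Set ℂ} (hs : IsOpen s) {Φ : ℂ → ℂ}
    (hd : DifferentiableOn ℂ Φ s) (hinj : Set.InjOn Φ s) {z₀ : ℂ} (hz : z₀ ∈ s) :
    deriv Φ z₀ ≠ 0 := by
  intro hder
  have ha : AnalyticAt ℂ Φ z₀ := hd.analyticAt (hs.mem_nhds hz)
  have hg : AnalyticAt ℂ (fun z => Φ z - Φ z₀) z₀ := ha.sub analyticAt_const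
  -- order is finite
  have horder : analyticOrderAt (fun z => Φ z - Φ z₀) z₀ ≠ ⊤ := by
    intro htop
    rw [analyticOrderAt_eq_top] at htop
    have hmem : ∀ᶠ z in nhds z₀, z ∈ s := hs.mem_nhds hz
    have h2 : ∀ᶠ z in nhdsWithin z₀ {z₀}ᶜ, (Φ z - Φ z₀ = 0 ∧ z ∈ s) ∧ z ∈ ({z₀}ᶜ : Set ℂ) :=
      (((htop.and hmem).filter_mono nhdsWithin_le_nhds).and eventually_mem_nhdsWithin)
    obtain ⟨z, ⟨hΦz, hzs⟩, hne⟩ := h2.exists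
    exact hne (hinj hzs hz (by linear_combination hΦz))
  lift analyticOrderAt (fun z => Φ z - Φ z₀) z₀ to ℕ using horder with k hk
  obtain ⟨h, hh_an, hh0, hev⟩ := (hg.analyticOrderAt_eq_natCast (n := k)).mp hk.symm
  simp only [smul_eq_mul] at hev
  -- k ≥ 2
  have hk0 : k ≠ 0 := by
    rintro rfl
    have := hev.self_of_nhds
    simp at this
    exact hh0 this.symm
  have hk1 : k ≠ 1 := by
    rintro rfl
    have hEE : (fun z => Φ z - Φ z₀) =ᶠ[nhds z₀] (fun z => (z - z₀) ^ 1 * h z) := hev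
    have hd1 : deriv (fun z => Φ z - Φ z₀) z₀ = deriv (fun z => (z - z₀) ^ 1 * h z) z₀ :=
      hEE.deriv_eq
    have hd2 : HasDerivAt (fun z : ℂ => (z - z₀) ^ 1 * h z) (h z₀) z₀ := by
      have h1 : HasDerivAt (fun z : ℂ => (z - z₀) ^ 1) 1 z₀ := by
        simpa using ((hasDerivAt_id z₀).sub_const z₀)
      have h2 : HasDerivAt h (deriv h z₀) z₀ := hh_an.differentiableAt.hasDerivAt
      have := h1.fun_mul h2
      simpa using this
    have hd3 : deriv (fun z => Φ z - Φ z₀) z₀ = deriv Φ z₀ := by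
      simp [deriv_sub_const]
    rw [hd3, hder] at hd1
    exact hh0 (by rw [← hd2.deriv, ← hd1])
  have hk2 : 2 ≤ k := by omega
  have hkc : (k:ℂ) ≠ 0 := Nat.cast_ne_zero.mpr hk0
  -- k-th root of h near z₀
  set c : ℂ := Complex.exp (Complex.log (h z₀) / k) with hc
  have hcne : c ≠ 0 := Complex.exp_ne_zero _
  set r : ℂ → ℂ := fun z => c * Complex.exp (Complex.log (h z / h z₀) / k) with hr
  have hr_an : AnalyticAt ℂ r z₀ := by
    apply analyticAt_const.mul
    apply AnalyticAt.cexp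
    have hdiv : AnalyticAt ℂ (fun z => h z / h z₀) z₀ := hh_an.div analyticAt_const hh0
    have hlog : AnalyticAt ℂ (fun z => Complex.log (h z / h z₀)) z₀ :=
      hdiv.clog (by simp [div_self hh0, Complex.one_mem_slitPlane])
    exact hlog.div analyticAt_const hkc
  have hrz₀ : r z₀ = c := by
    simp only [hr, div_self hh0, Complex.log_one, zero_div, Complex.exp_zero, mul_one]
  have hroot : ∀ᶠ z in nhds z₀, (r z) ^ k = h z := by
    filter_upwards [hh_an.continuousAt.eventually_ne hh0] with z hz
    rw [hr]
    simp only
    rw [mul_pow, ← Complex.exp_nat_mul, ← Complex.exp_nat_mul]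
    rw [mul_div_cancel₀ _ hkc, mul_div_cancel₀ _ hkc, Complex.exp_log hh0,
      Complex.exp_log (div_ne_zero hz hh0)]
    field_simp
  -- the function φ
  set φ : ℂ → ℂ := fun z => (z - z₀) * r z with hφ
  have hφ_an : AnalyticAt ℂ φ z₀ := (analyticAt_id.sub analyticAt_const).mul hr_an
  have hφev : ∀ᶠ z in nhds z₀, Φ z - Φ z₀ = (φ z) ^ k := by
    filter_upwards [hev, hroot] with z h1 h2
    rw [h1, hφ]
    simp only
    rw [mul_pow, h2]
  have hφz₀ : φ z₀ = 0 := by simp [hφ]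
  have hφderiv : HasDerivAt φ c z₀ := by
    have h1 : HasDerivAt (fun z : ℂ => z - z₀) 1 z₀ := (hasDerivAt_id z₀).sub_const z₀
    have h2 : HasDerivAt r (deriv r z₀) z₀ := hr_an.differentiableAt.hasDerivAt
    have := h1.fun_mul h2
    simpa [hrz₀] using this
  have hmap : nhds (0:ℂ) ≤ Filter.map φ (nhds z₀) := by
    rcases hφ_an.eventually_constant_or_nhds_le_map_nhds with hcst | hle
    · exfalso
      have hEE : φ =ᶠ[nhds z₀] (fun _ => φ z₀) := hcst
      have : deriv φ z₀ = 0 := by rw [hEE.deriv_eq]; simp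
      rw [hφderiv.deriv] at this
      exact hcne this
    · rwa [hφz₀] at hle
  -- pick a small ball in the image of a good neighborhood
  have hT : {z | Φ z - Φ z₀ = (φ z) ^ k} ∩ s ∈ nhds z₀ :=
    Filter.inter_mem (hφev.mono fun z hz => hz) (hs.mem_nhds hz)
  set T := {z | Φ z - Φ z₀ = (φ z) ^ k} ∩ s with hTdef
  have himg : φ '' T ∈ nhds (0:ℂ) := hmap (image_mem_map hT)
  obtain ⟨ε, hε, hball⟩ := Metric.mem_nhds_iff.mp himg
  -- the k-th root of unity
  set ω : ℂ := Complex.exp (((2 * Real.pi / k : ℝ) : ℂ) * Complex.I) with hω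
  have hωabs : ‖ω‖ = 1 := Complex.norm_exp_ofReal_mul_I _
  have hωpow : ω ^ k = 1 := by
    rw [hω, ← Complex.exp_nat_mul]
    have : (k:ℂ) * (((2 * Real.pi / k : ℝ) : ℂ) * Complex.I) = 2 * Real.pi * Complex.I := by
      push_cast
      field_simp
    rw [this, Complex.exp_two_pi_mul_I]
  have hωne : ω ≠ 1 := by
    intro h1
    rw [hω, Complex.exp_eq_one_iff] at h1
    obtain ⟨m, hm⟩ := h1
    have h2 : ((2 * Real.pi / k : ℝ) : ℂ) = (m : ℂ) * (2 * Real.pi) := by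
      refine mul_right_cancel₀ Complex.I_ne_zero ?_
      rw [hm]; ring
    have h3 : (2 * Real.pi / k : ℝ) = (m : ℝ) * (2 * Real.pi) := by exact_mod_cast h2
    have hkpos : (0:ℝ) < k := by exact_mod_cast Nat.pos_of_ne_zero hk0
    have hπ : (0:ℝ) < Real.pi := Real.pi_pos
    have hL : (0:ℝ) < 2 * Real.pi / k := by positivity
    have hm0 : (0:ℝ) < (m:ℝ) := by nlinarith
    have hm0' : 0 < m := by exact_mod_cast hm0
    have hm1 : (1:ℝ) ≤ (m:ℝ) := by exact_mod_cast hm0'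
    have hk2' : (2:ℝ) ≤ (k:ℝ) := by exact_mod_cast hk2
    have : 2 * Real.pi / (k:ℝ) ≤ Real.pi := by
      rw [div_le_iff₀ hkpos]; nlinarith
    nlinarith
  -- two preimages
  set ζ : ℂ := ((ε/2 : ℝ) : ℂ) with hζ
  have hε2 : (0:ℝ) < ε/2 := by linarith
  have hζne : ζ ≠ 0 := by
    simp only [hζ, ne_eq, Complex.ofReal_eq_zero]
    positivity
  have hζabs : ‖ζ‖ = ε/2 := by
    rw [hζ, Complex.norm_real, Real.norm_eq_abs, abs_of_pos hε2]
  have hζmem : ζ ∈ Metric.ball (0:ℂ) ε := by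
    simp only [Metric.mem_ball, dist_zero_right, hζabs]
    linarith
  have hζωmem : ζ * ω ∈ Metric.ball (0:ℂ) ε := by
    simp only [Metric.mem_ball, dist_zero_right, norm_mul, hωabs, mul_one,
      hζabs]
    linarith
  obtain ⟨z₁, hz₁T, hz₁⟩ := hball hζmem
  obtain ⟨z₂, hz₂T, hz₂⟩ := hball hζωmem
  have hne12 : z₁ ≠ z₂ := by
    intro h12
    rw [h12, hz₂] at hz₁
    have : ω = 1 := by
      have := mul_left_cancel₀ hζne (by rw [hz₁, mul_one] : ζ * ω = ζ * 1)
      exact this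
    exact hωne this
  have hΦeq : Φ z₁ = Φ z₂ := by
    have e1 : Φ z₁ - Φ z₀ = (φ z₁) ^ k := hz₁T.1
    have e2 : Φ z₂ - Φ z₀ = (φ z₂) ^ k := hz₂T.1
    rw [hz₁] at e1
    rw [hz₂, mul_pow, hωpow, mul_one] at e2
    linear_combination e1 - e2
  exact hne12 (hinj hz₁T.2 hz₂T.2 hΦeq)

/-- `∮_{|u|=ρ} u^m / u^(n+1) du = 2πi δ_{mn}` for `ρ > 0`. -/
lemma circleIntegral_pow_mul_inv_pow (ρ : ℝ) (hρ : 0 < ρ) (m n : ℕ) :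
    (∮ u in C(0, ρ), u ^ m * ((u:ℂ) ^ (n+1))⁻¹) =
      if m = n then 2 * Real.pi * Complex.I else 0 := by
  have hcongr : ∀ u ∈ sphere (0:ℂ) ρ, u ^ m * ((u:ℂ) ^ (n+1))⁻¹ = (u - 0) ^ ((m:ℤ) - (n+1)) := by
    intro u hu
    have hu0 : u ≠ 0 := by
      intro h
      rw [mem_sphere_iff_norm, h] at hu
      simp at hu
      linarith
    rw [sub_zero, zpow_sub₀ hu0, div_eq_mul_inv]
    norm_cast
  rw [circleIntegral.integral_congr (le_of_lt hρ) hcongr]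
  by_cases hmn : m = n
  · subst hmn
    have h1 : ((m:ℤ) - (m+1)) = -1 := by ring
    rw [h1]
    have h2 : ∀ z : ℂ, (z - 0) ^ (-1 : ℤ) = (z - 0)⁻¹ := fun z => zpow_neg_one _
    rw [circleIntegral.integral_congr (le_of_lt hρ) (fun z _ => h2 z)]
    rw [circleIntegral.integral_sub_inv_of_mem_ball (by simpa using hρ)]
    simp
  · rw [circleIntegral.integral_sub_zpow_of_ne, if_neg hmn]
    omega

/-- A function holomorphic outside the unit disk tending to `0` at `∞` has vanishing
`n+1`-st circle moments, `n ≥ 1`. -/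
lemma circleIntegral_vanish (q : ℂ → ℂ)
    (hq : ∀ u : ℂ, 1 < ‖u‖ → DifferentiableAt ℂ q u)
    (hq0 : Tendsto q (Bornology.cobounded ℂ) (nhds 0)) (n : ℕ) (hn : 1 ≤ n)
    {ρ : ℝ} (hρ : 1 < ρ) :
    (∮ u in C(0, ρ), q u * ((u:ℂ) ^ (n+1))⁻¹) = 0 := by
  set g : ℂ → ℂ := fun u => q u * ((u:ℂ) ^ (n+1))⁻¹ with hg
  have hgdiff : ∀ u : ℂ, 1 < ‖u‖ → DifferentiableAt ℂ g u := by
    intro u hu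
    have hu0 : u ≠ 0 := by
      intro h; rw [h] at hu; simp at hu; linarith
    exact (hq u hu).mul ((differentiable_pow (n+1)).differentiableAt.inv
      (pow_ne_zero _ hu0))
  have hconst : ∀ ρ₂ : ℝ, ρ ≤ ρ₂ → (∮ u in C(0, ρ₂), g u) = ∮ u in C(0, ρ), g u := by
    intro ρ₂ hle
    refine circleIntegral_eq_of_differentiable_on_annulus_off_countable
      (by linarith) hle Set.countable_empty ?_ ?_
    · intro u hu
      have : 1 < ‖u‖ := by
        have := hu.2
        simp only [mem_ball, dist_zero_right, not_lt] at this
        linarith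
      exact (hgdiff u this).continuousAt.continuousWithinAt
    · intro u hu
      have := hu.1.2
      simp only [mem_closedBall, dist_zero_right, not_le] at this
      exact hgdiff u (by linarith)
  have hbound : ∀ ε : ℝ, 0 < ε → ‖∮ u in C(0, ρ), g u‖ ≤ 2 * Real.pi * ε := by
    intro ε hε
    have hev : ∀ᶠ u in Bornology.cobounded ℂ, ‖q u‖ ≤ ε := by
      have := Metric.tendsto_nhds.mp hq0 ε hε
      filter_upwards [this] with u hu
      rw [dist_zero_right] at hu
      exact le_of_lt hu
    obtain ⟨B, -, hB⟩ := (Filter.hasBasis_cobounded_norm.eventually_iff).mp hev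
    set ρ₂ : ℝ := max B ρ with hρ₂
    have hρ₂ρ : ρ ≤ ρ₂ := le_max_right _ _
    have hρ₂1 : 1 < ρ₂ := lt_of_lt_of_le hρ hρ₂ρ
    rw [← hconst ρ₂ hρ₂ρ]
    have hb2 : ∀ u ∈ sphere (0:ℂ) ρ₂, ‖g u‖ ≤ ε / ρ₂ ^ (n+1) := by
      intro u hu
      rw [mem_sphere_iff_norm, sub_zero] at hu
      have h1 : ‖q u‖ ≤ ε := hB (by
        simp only [mem_setOf_eq, hu]
        exact le_max_left _ _)
      rw [hg]
      simp only [norm_mul, norm_inv, norm_pow, hu]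
      rw [div_eq_mul_inv]
      gcongr
    have hkey := circleIntegral.norm_integral_le_of_norm_le_const
      (by linarith : (0:ℝ) ≤ ρ₂) hb2
    refine le_trans hkey ?_
    have hpow1 : (1:ℝ) ≤ ρ₂ ^ n := one_le_pow₀ (by linarith)
    have heq : ρ₂ * (ε / ρ₂ ^ (n+1)) = ε / ρ₂ ^ n := by
      rw [pow_succ]
      field_simp
    have h3 : ρ₂ * (ε / ρ₂ ^ (n+1)) ≤ ε := by
      rw [heq]
      exact div_le_self (le_of_lt hε) hpow1
    nlinarith [Real.pi_pos]
  refine norm_le_zero_iff.mp (le_of_forall_pos_le_add fun ε hε => ?_)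
  have := hbound (ε / (2 * Real.pi + 1)) (by positivity)
  have h4 : 2 * Real.pi * (ε / (2 * Real.pi + 1)) ≤ ε := by
    rw [mul_div_assoc']
    rw [div_le_iff₀ (by positivity)]
    nlinarith [Real.pi_pos]
  linarith

lemma isConnected_exterior (C : ℝ) (hC : 0 ≤ C) :
    IsConnected {w : ℂ | C < ‖w‖} := by
  have hrank : 1 < Module.rank ℝ ℂ := by
    rw [rank_real_complex]; norm_num
  have h3 : IsConnected ((sphere (0:ℂ) 1) ×ˢ (Ioi C)) :=
    (isPathConnected_sphere hrank 0 zero_le_one).isConnected.prod isConnected_Ioi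
  have h4 : IsConnected ((fun p : ℂ × ℝ => p.2 • p.1) '' ((sphere (0:ℂ) 1) ×ˢ (Ioi C))) :=
    h3.image _ (continuous_snd.smul continuous_fst).continuousOn
  convert h4 using 1
  ext u
  simp only [mem_setOf_eq, mem_image, Prod.exists, mem_prod, mem_sphere_iff_norm, sub_zero,
    mem_Ioi]
  constructor
  · intro hu
    have hu0 : u ≠ 0 := by
      intro h; rw [h] at hu; simp at hu; linarith
    refine ⟨‖u‖⁻¹ • u, ‖u‖, ⟨?_, ?_⟩, ?_⟩
    · rw [norm_smul, norm_inv, norm_norm, inv_mul_cancel₀ (norm_ne_zero_iff.mpr hu0)]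
    · exact hu
    · rw [smul_smul, mul_inv_cancel₀ (norm_ne_zero_iff.mpr hu0), one_smul]
  · rintro ⟨w, t, ⟨hw, ht⟩, rfl⟩
    have : ‖t • w‖ = t := by
      rw [norm_smul, hw, mul_one, Real.norm_eq_abs,
        abs_of_pos (lt_of_le_of_lt hC ht)]
    rw [this]; exact ht

section Psi

variable {K : Set ℂ} {Φ Ψ : ℂ → ℂ}

lemma psi_mem (hbij : Set.BijOn Φ Kᶜ {w : ℂ | 1 < ‖w‖})
    (hΨl : ∀ z ∈ Kᶜ, Ψ (Φ z) = z) {w : ℂ} (hw : 1 < ‖w‖) : Ψ w ∈ Kᶜ := by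
  obtain ⟨z, hz, rfl⟩ := hbij.surjOn (show w ∈ {w : ℂ | 1 < ‖w‖} from hw)
  rw [hΨl z hz]; exact hz

lemma psi_continuousAt (hK : IsCompact K) (hd : DifferentiableOn ℂ Φ Kᶜ)
    (hbij : Set.BijOn Φ Kᶜ {w : ℂ | 1 < ‖w‖})
    (hΨl : ∀ z ∈ Kᶜ, Ψ (Φ z) = z) (hΨr : ∀ w : ℂ, 1 < ‖w‖ → Φ (Ψ w) = w)
    {w : ℂ} (hw : 1 < ‖w‖) : ContinuousAt Ψ w := by
  have hopen : IsOpen Kᶜ := hK.isClosed.isOpen_compl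
  have hΨw : Ψ w ∈ Kᶜ := psi_mem hbij hΨl hw
  intro U hU
  have hU' : U ∩ Kᶜ ∈ nhds (Ψ w) := Filter.inter_mem hU (hopen.mem_nhds hΨw)
  have himg : Φ '' (U ∩ Kᶜ) ∈ nhds w := by
    have h1 := nhds_le_map_of_injOn hopen hd hbij.injOn hΨw
    rw [hΨr w hw] at h1
    exact h1 (Filter.image_mem_map hU')
  rw [Filter.mem_map]
  refine Filter.mem_of_superset himg ?_
  rintro x ⟨z, ⟨hzU, hzK⟩, rfl⟩
  show Ψ (Φ z) ∈ U
  rw [hΨl z hzK]; exact hzU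

lemma psi_hasDerivAt (hK : IsCompact K) (hd : DifferentiableOn ℂ Φ Kᶜ)
    (hbij : Set.BijOn Φ Kᶜ {w : ℂ | 1 < ‖w‖})
    (hΨl : ∀ z ∈ Kᶜ, Ψ (Φ z) = z) (hΨr : ∀ w : ℂ, 1 < ‖w‖ → Φ (Ψ w) = w)
    {w : ℂ} (hw : 1 < ‖w‖) : DifferentiableAt ℂ Ψ w := by
  have hopen : IsOpen Kᶜ := hK.isClosed.isOpen_compl
  have hΨw : Ψ w ∈ Kᶜ := psi_mem hbij hΨl hw
  have hΦd : HasDerivAt Φ (deriv Φ (Ψ w)) (Ψ w) :=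
    ((hd.differentiableAt (hopen.mem_nhds hΨw)).hasDerivAt)
  have hne : deriv Φ (Ψ w) ≠ 0 := deriv_ne_zero_of_injOn hopen hd hbij.injOn hΨw
  have hev : ∀ᶠ y in nhds w, Φ (Ψ y) = y := by
    have : {w : ℂ | 1 < ‖w‖} ∈ nhds w :=
      (isOpen_lt continuous_const continuous_norm).mem_nhds hw
    filter_upwards [this] with y hy
    exact hΨr y hy
  exact (HasDerivAt.of_local_left_inverse (psi_continuousAt hK hd hbij hΨl hΨr hw)
    hΦd hne hev).differentiableAt

lemma psi_cobounded (hK : IsCompact K) (hd : DifferentiableOn ℂ Φ Kᶜ)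
    (hbij : Set.BijOn Φ Kᶜ {w : ℂ | 1 < ‖w‖})
    (hΨl : ∀ z ∈ Kᶜ, Ψ (Φ z) = z) (hΨr : ∀ w : ℂ, 1 < ‖w‖ → Φ (Ψ w) = w)
    {γ : ℝ} (hγ : 0 < γ)
    (htend : Tendsto (fun z => Φ z / z) (Bornology.cobounded ℂ) (nhds (γ : ℂ))) :
    Tendsto Ψ (Bornology.cobounded ℂ) (Bornology.cobounded ℂ) := by
  have hopen : IsOpen Kᶜ := hK.isClosed.isOpen_compl
  have hinj : Set.InjOn Φ Kᶜ := hbij.injOn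
  -- Φ is cobounded
  have hΦcob : Tendsto Φ (Bornology.cobounded ℂ) (Bornology.cobounded ℂ) := by
    rw [← tendsto_norm_atTop_iff_cobounded]
    have hset : {x : ℂ | γ/2 < ‖x‖} ∈ nhds (γ:ℂ) := by
      refine (isOpen_lt continuous_const continuous_norm).mem_nhds ?_
      simp only [mem_setOf_eq, Complex.norm_real, Real.norm_eq_abs, abs_of_pos hγ]
      linarith
    have h1 : ∀ᶠ z : ℂ in Bornology.cobounded ℂ, γ/2 < ‖Φ z / z‖ := htend.eventually hset
    have h2 : ∀ᶠ z : ℂ in Bornology.cobounded ℂ, (1:ℝ) ≤ ‖z‖ :=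
      eventually_cobounded_le_norm 1
    have hev : ∀ᶠ z : ℂ in Bornology.cobounded ℂ, γ/2 * ‖z‖ ≤ ‖Φ z‖ := by
      filter_upwards [h1, h2] with z h1z h2z
      rw [norm_div] at h1z
      have hz0 : (0:ℝ) < ‖z‖ := by linarith
      exact le_of_lt ((lt_div_iff₀ hz0).mp h1z)
    refine tendsto_atTop_mono' _ hev ?_
    exact (tendsto_norm_cobounded_atTop).const_mul_atTop (by positivity)
  -- main argument
  rw [← tendsto_norm_atTop_iff_cobounded, Filter.tendsto_atTop]
  intro M
  obtain ⟨M₀, hM₀⟩ := hK.isBounded.subset_closedBall 0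
  set N : ℝ := max M M₀ + 1 with hN
  have hNM : M < N := by
    have := le_max_left M M₀; simp only [hN]; linarith
  have hNM₀ : M₀ < N := by
    have := le_max_right M M₀; simp only [hN]; linarith
  have hsub : ∀ z : ℂ, N ≤ ‖z‖ → z ∈ Kᶜ := by
    intro z hz hzK
    have := hM₀ hzK
    rw [mem_closedBall, dist_zero_right] at this
    linarith
  have hsphere : sphere (0:ℂ) N ⊆ Kᶜ := by
    intro z hz
    rw [mem_sphere_iff_norm, sub_zero] at hz
    exact hsub z (le_of_eq hz.symm)
  have hcomp : IsCompact (Φ '' sphere 0 N) :=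
    (isCompact_sphere 0 N).image_of_continuousOn (hd.continuousOn.mono hsphere)
  obtain ⟨C₀, hC₀⟩ := hcomp.isBounded.subset_closedBall 0
  set C₁ : ℝ := max C₀ 1 with hC₁
  have hC₁1 : (1:ℝ) ≤ C₁ := le_max_right _ _
  -- if |Ψ w| = N then |w| ≤ C₁
  have hnotsphere : ∀ w : ℂ, C₁ < ‖w‖ → ‖Ψ w‖ ≠ N := by
    intro w hw heq
    have hw1 : 1 < ‖w‖ := lt_of_le_of_lt hC₁1 hw
    have hmem : Ψ w ∈ sphere (0:ℂ) N := by
      rw [mem_sphere_iff_norm, sub_zero]; exact heq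
    have himg : w ∈ Φ '' sphere 0 N := ⟨Ψ w, hmem, hΨr w hw1⟩
    have := hC₀ himg
    rw [mem_closedBall, dist_zero_right] at this
    have : ‖w‖ ≤ C₁ := le_trans this (le_max_left _ _)
    linarith
  -- the exterior witness
  obtain ⟨zs, hzs1, hzs2⟩ := ((eventually_cobounded_le_norm (N + 1)).and
    (hΦcob.eventually (eventually_cobounded_le_norm (C₁ + 1)))).exists
  -- key claim via connectedness
  have claim : ∀ u : ℂ, C₁ < ‖u‖ → N < ‖Ψ u‖ := by
    intro u hu
    by_contra hcon
    push_neg at hcon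
    have hu1 : 1 < ‖u‖ := lt_of_le_of_lt hC₁1 hu
    have hΨu : Ψ u ∈ Kᶜ := psi_mem hbij hΨl hu1
    have hΨuball : ‖Ψ u‖ < N := lt_of_le_of_ne hcon (hnotsphere u hu)
    set E : Set ℂ := Kᶜ ∩ ball (0:ℂ) N with hE
    set O : Set ℂ := {z : ℂ | N < ‖z‖} with hO
    have hOopen : IsOpen O := isOpen_lt continuous_const continuous_norm
    have hOsub : O ⊆ Kᶜ := fun z hz => hsub z (le_of_lt hz)
    have hEopen : IsOpen E := hopen.inter isOpen_ball
    have h1 : IsOpen (Φ '' E) :=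
      isOpen_image_of_injOn hopen hd hinj hEopen inter_subset_left
    have h2 : IsOpen (Φ '' O) := isOpen_image_of_injOn hopen hd hinj hOopen hOsub
    set W : Set ℂ := {w : ℂ | C₁ < ‖w‖} with hW
    have hWconn : IsPreconnected W :=
      (isConnected_exterior C₁ (by linarith)).isPreconnected
    have hWcover : W ⊆ Φ '' E ∪ Φ '' O := by
      intro w hw
      have hw1 : 1 < ‖w‖ := lt_of_le_of_lt hC₁1 hw
      have hmemK : Ψ w ∈ Kᶜ := psi_mem hbij hΨl hw1
      have heqw : Φ (Ψ w) = w := hΨr w hw1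
      rcases lt_or_gt_of_ne (hnotsphere w hw) with hlt | hgt
      · exact Or.inl ⟨Ψ w, ⟨hmemK, by
          rw [mem_ball, dist_zero_right]; exact hlt⟩, heqw⟩
      · exact Or.inr ⟨Ψ w, hgt, heqw⟩
    have hW1 : (W ∩ Φ '' E).Nonempty :=
      ⟨u, hu, ⟨Ψ u, ⟨hΨu, by
        rw [mem_ball, dist_zero_right]; exact hΨuball⟩, hΨr u hu1⟩⟩
    have hW2 : (W ∩ Φ '' O).Nonempty := by
      refine ⟨Φ zs, ?_, ⟨zs, ?_, rfl⟩⟩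
      · show C₁ < ‖Φ zs‖
        linarith
      · show N < ‖zs‖
        linarith
    obtain ⟨x, -, hxE, hxO⟩ := hWconn (Φ '' E) (Φ '' O) h1 h2 hWcover hW1 hW2
    obtain ⟨z1, hz1, hz1e⟩ := hxE
    obtain ⟨z2, hz2, hz2e⟩ := hxO
    have hzz : z1 = z2 := hinj hz1.1 (hOsub hz2) (by rw [hz1e, hz2e])
    have hb1 : ‖z1‖ < N := by
      have := hz1.2
      rwa [mem_ball, dist_zero_right] at this
    have hb2 : N < ‖z2‖ := hz2
    rw [hzz] at hb1
    linarith
  filter_upwards [eventually_cobounded_le_norm (C₁ + 1)] with u hu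
  have := claim u (by linarith)
  linarith

end Psi

lemma circleIntegral_finset_sum {ι : Type*} (s : Finset ι) (g : ι → ℂ → ℂ) (c : ℂ) (ρ : ℝ)
    (h : ∀ i ∈ s, CircleIntegrable (g i) c ρ) :
    (∮ u in C(c, ρ), ∑ i ∈ s, g i u) = ∑ i ∈ s, ∮ u in C(c, ρ), g i u := by
  simp only [circleIntegral, Finset.smul_sum]
  exact intervalIntegral.integral_finset_sum (fun i hi => (h i hi).out)


/-- The key circle-integral identity for the conjugated Faber expansion: for `1 < r < R < R′`
and `f` holomorphic on `Ω_{R′}` with Faber coefficients `(aₙ)`,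
`∮_{|w|=R} conj(f(Φ⁻¹(w))) wⁿ⁻¹ dw − ∮_{|w|=r} conj(f(Φ⁻¹(w))) wⁿ⁻¹ dw
  = 2πi conj(aₙ)(R²ⁿ − r²ⁿ)`. -/
theorem circleIntegral_conj_faber
    (K : Set ℂ) (Φ : ℂ → ℂ) (γ : ℝ) (F : ℕ → Polynomial ℂ)
    (hK : IsContinuum K) (hΦ : IsExtRiemannMap K Φ γ) (hF : IsFaberFamily Φ F)
    (Ψ : ℂ → ℂ) (hΨl : ∀ z ∈ Kᶜ, Ψ (Φ z) = z)
    (hΨr : ∀ w : ℂ, 1 < ‖w‖ → Φ (Ψ w) = w)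
    (R' R : ℝ) (hR : 1 < R) (hRR' : R < R')
    (f : ℂ → ℂ) (a : ℕ → ℂ)
    (hf : DifferentiableOn ℂ f (greenLevel K Φ R'))
    (ha : HasFaberExpansion F (greenLevel K Φ R') f a) :
    ∀ r : ℝ, 1 < r → r < R → ∀ n : ℕ, 1 ≤ n →
      (∮ w in C(0, R), (starRingEnd ℂ) (f (Ψ w)) * w ^ (n - 1)) -
        (∮ w in C(0, r), (starRingEnd ℂ) (f (Ψ w)) * w ^ (n - 1)) =
      2 * (Real.pi : ℂ) * Complex.I * (starRingEnd ℂ) (a n) *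
        (((R : ℂ)) ^ (2 * n) - ((r : ℂ)) ^ (2 * n)) := by
  intro r hr hrR n hn
  obtain ⟨hγ, hd, hbij, htend⟩ := hΦ
  have hKc : IsCompact K := hK.1
  have hopen : IsOpen Kᶜ := hKc.isClosed.isOpen_compl
  have hΨcob : Tendsto Ψ (Bornology.cobounded ℂ) (Bornology.cobounded ℂ) :=
    psi_cobounded hKc hd hbij hΨl hΨr hγ htend
  have hΨdiffat : ∀ u : ℂ, 1 < ‖u‖ → DifferentiableAt ℂ Ψ u :=
    fun u hu => psi_hasDerivAt hKc hd hbij hΨl hΨr hu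
  have hΨcontat : ∀ u : ℂ, 1 < ‖u‖ → ContinuousAt Ψ u :=
    fun u hu => psi_continuousAt hKc hd hbij hΨl hΨr hu
  -- the open set where f is continuous
  set O' : Set ℂ := Kᶜ ∩ Φ ⁻¹' (ball (0:ℂ) R') with hO'def
  have hO'open : IsOpen O' := hd.continuousOn.isOpen_inter_preimage hopen isOpen_ball
  have hO'sub : O' ⊆ greenLevel K Φ R' := by
    rintro z ⟨hz1, hz2⟩
    right
    rw [mem_preimage, mem_ball, dist_zero_right] at hz2
    exact ⟨hz1, hz2⟩
  have hfO' : ∀ z ∈ O', DifferentiableAt ℂ f z :=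
    fun z hz => (hf.mono hO'sub).differentiableAt (hO'open.mem_nhds hz)
  have hΨO' : ∀ u : ℂ, 1 < ‖u‖ → ‖u‖ < R' → Ψ u ∈ O' := by
    intro u h1 h2
    refine ⟨psi_mem hbij hΨl h1, ?_⟩
    rw [mem_preimage, mem_ball, dist_zero_right, hΨr u h1]
    exact h2
  have hfΨcont : ∀ u : ℂ, 1 < ‖u‖ → ‖u‖ < R' →
      ContinuousAt (fun u => f (Ψ u)) u := by
    intro u h1 h2
    exact ((hfO' _ (hΨO' u h1 h2)).continuousAt).comp (hΨcontat u h1)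
  -- the key coefficient formula
  have hC : ∀ ρ : ℝ, 1 < ρ → ρ < R' →
      (∮ u in C(0, ρ), f (Ψ u) * ((u:ℂ) ^ (n+1))⁻¹) =
        2 * Real.pi * Complex.I * a n := by
    intro ρ hρ1 hρR'
    have hρ0 : (0:ℝ) < ρ := by linarith
    have hsphere_abs : ∀ u : ℂ, u ∈ sphere (0:ℂ) ρ → ‖u‖ = ρ := by
      intro u hu
      rwa [mem_sphere_iff_norm, sub_zero] at hu
    have hsphere_ne : ∀ u : ℂ, u ∈ sphere (0:ℂ) ρ → u ≠ 0 := by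
      intro u hu h0
      rw [h0] at hu
      have := hsphere_abs 0 hu
      simp at this
      linarith
    have hinvcont : ContinuousOn (fun u : ℂ => ((u:ℂ) ^ (n+1))⁻¹) (sphere 0 ρ) := by
      intro u hu
      exact (((continuous_pow (n+1)).continuousAt).inv₀
        (pow_ne_zero _ (hsphere_ne u hu))).continuousWithinAt
    have hfΨcontOn : ContinuousOn (fun u => f (Ψ u)) (sphere 0 ρ) := by
      intro u hu
      exact (hfΨcont u (by rw [hsphere_abs u hu]; exact hρ1)
        (by rw [hsphere_abs u hu]; exact hρR')).continuousWithinAt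
    have hint_f : CircleIntegrable (fun u => f (Ψ u) * ((u:ℂ) ^ (n+1))⁻¹) 0 ρ :=
      (hfΨcontOn.mul hinvcont).circleIntegrable hρ0.le
    -- the compact set and uniform convergence
    set L : Set ℂ := Ψ '' sphere 0 ρ with hLdef
    have hΨcontOn : ContinuousOn Ψ (sphere 0 ρ) := by
      intro u hu
      exact (hΨcontat u (by rw [hsphere_abs u hu]; exact hρ1)).continuousWithinAt
    have hLcomp : IsCompact L := (isCompact_sphere 0 ρ).image_of_continuousOn hΨcontOn
    have hLsub : L ⊆ greenLevel K Φ R' := by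
      rintro z ⟨u, hu, rfl⟩
      have h1 : 1 < ‖u‖ := by rw [hsphere_abs u hu]; exact hρ1
      exact hO'sub (hΨO' u h1 (by rw [hsphere_abs u hu]; exact hρR'))
    have hTU := ha L hLsub hLcomp
    -- partial sums
    set S : ℕ → ℂ → ℂ := fun N z => ∑ m ∈ Finset.range N, a m * (F m).eval z with hSdef
    have hSc : ∀ N, Continuous (S N) := by
      intro N
      exact continuous_finset_sum _ fun m _ => continuous_const.mul (F m).continuous
    have hint_S : ∀ N, CircleIntegrable (fun u => S N (Ψ u) * ((u:ℂ) ^ (n+1))⁻¹) 0 ρ :=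
      fun N => (((hSc N).comp_continuousOn hΨcontOn).mul hinvcont).circleIntegrable hρ0.le
    set Iseq : ℕ → ℂ := fun N => ∮ u in C(0, ρ), S N (Ψ u) * ((u:ℂ) ^ (n+1))⁻¹ with hIseqdef
    have htendI : Tendsto Iseq atTop
        (nhds (∮ u in C(0, ρ), f (Ψ u) * ((u:ℂ) ^ (n+1))⁻¹)) := by
      rw [Metric.tendsto_atTop]
      intro ε hε
      have hden : (0:ℝ) < 2 * Real.pi * ρ + 1 := by positivity
      set ε' : ℝ := ε / (2 * Real.pi * ρ + 1) with hε'def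
      have hε' : 0 < ε' := by positivity
      obtain ⟨N₀, hN₀⟩ := Filter.eventually_atTop.mp (tendstoUniformlyOn_iff.mp hTU ε' hε')
      refine ⟨N₀, fun N hN => ?_⟩
      rw [dist_eq_norm]
      have hdiff : Iseq N - (∮ u in C(0, ρ), f (Ψ u) * ((u:ℂ) ^ (n+1))⁻¹)
          = ∮ u in C(0, ρ), (S N (Ψ u) - f (Ψ u)) * ((u:ℂ) ^ (n+1))⁻¹ := by
        rw [← circleIntegral.integral_sub (hint_S N) hint_f]
        apply circleIntegral.integral_congr hρ0.le
        intro u _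
        simp only
        ring
      rw [hdiff]
      have hb : ∀ u ∈ sphere (0:ℂ) ρ, ‖(S N (Ψ u) - f (Ψ u)) * ((u:ℂ) ^ (n+1))⁻¹‖ ≤ ε' := by
        intro u hu
        rw [norm_mul]
        have h1 : ‖S N (Ψ u) - f (Ψ u)‖ < ε' := by
          have := hN₀ N hN (Ψ u) ⟨u, hu, rfl⟩
          rw [dist_eq_norm] at this
          calc ‖S N (Ψ u) - f (Ψ u)‖ = ‖f (Ψ u) - S N (Ψ u)‖ := by rw [norm_sub_rev]
          _ < ε' := this
        have h2 : ‖((u:ℂ) ^ (n+1))⁻¹‖ ≤ 1 := by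
          rw [norm_inv, norm_pow, hsphere_abs u hu]
          rw [inv_le_one₀ (by positivity)]
          exact one_le_pow₀ hρ1.le
        calc ‖S N (Ψ u) - f (Ψ u)‖ * ‖((u:ℂ) ^ (n+1))⁻¹‖
            ≤ ε' * 1 := mul_le_mul (le_of_lt h1) h2 (norm_nonneg _) (le_of_lt hε')
          _ = ε' := mul_one _
      have hnorm := circleIntegral.norm_integral_le_of_norm_le_const hρ0.le hb
      have hfin : 2 * Real.pi * ρ * ε' < ε := by
        rw [hε'def, mul_div_assoc', div_lt_iff₀ hden]
        nlinarith [Real.pi_pos]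
      exact lt_of_le_of_lt hnorm hfin
    -- evaluation of each Faber moment
    have hval : ∀ m : ℕ, (∮ u in C(0, ρ), (F m).eval (Ψ u) * ((u:ℂ) ^ (n+1))⁻¹)
        = if m = n then 2 * Real.pi * Complex.I else 0 := by
      intro m
      set q : ℂ → ℂ := fun u => u ^ m - (F m).eval (Ψ u) with hqdef
      have hsplit : ∀ u ∈ sphere (0:ℂ) ρ,
          (F m).eval (Ψ u) * ((u:ℂ) ^ (n+1))⁻¹
            = u ^ m * ((u:ℂ) ^ (n+1))⁻¹ - q u * ((u:ℂ) ^ (n+1))⁻¹ := by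
        intro u _
        rw [hqdef]
        ring
      rw [circleIntegral.integral_congr hρ0.le hsplit]
      have hqcont : ContinuousOn q (sphere 0 ρ) := by
        intro u hu
        have h1 : 1 < ‖u‖ := by rw [hsphere_abs u hu]; exact hρ1
        exact ((continuous_pow m).continuousAt).continuousWithinAt.sub
          (((F m).continuous.continuousAt).comp (hΨcontat u h1)).continuousWithinAt
      have hint1 : CircleIntegrable (fun u : ℂ => u ^ m * ((u:ℂ) ^ (n+1))⁻¹) 0 ρ :=
        (((continuous_pow m).continuousOn).mul hinvcont).circleIntegrable hρ0.le
      have hint2 : CircleIntegrable (fun u => q u * ((u:ℂ) ^ (n+1))⁻¹) 0 ρ :=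
        (hqcont.mul hinvcont).circleIntegrable hρ0.le
      rw [circleIntegral.integral_sub hint1 hint2,
        circleIntegral_pow_mul_inv_pow ρ hρ0 m n]
      have hq0 : Tendsto q (Bornology.cobounded ℂ) (nhds 0) := by
        have h2 : Tendsto (fun u => Φ (Ψ u) ^ m - (F m).eval (Ψ u))
            (Bornology.cobounded ℂ) (nhds 0) := (hF m).2.comp hΨcob
        have h3 : (fun u => Φ (Ψ u) ^ m - (F m).eval (Ψ u))
            =ᶠ[Bornology.cobounded ℂ] (fun u => u ^ m - (F m).eval (Ψ u)) := by
          filter_upwards [eventually_cobounded_le_norm 2] with u hu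
          have h1u : 1 < ‖u‖ := by
            linarith
          rw [hΨr u h1u]
        exact (tendsto_congr' h3).mp h2
      have hqdiff : ∀ u : ℂ, 1 < ‖u‖ → DifferentiableAt ℂ q u := by
        intro u hu
        exact ((differentiable_pow m).differentiableAt).sub
          ((F m).differentiable.differentiableAt.comp u (hΨdiffat u hu))
      rw [circleIntegral_vanish q hqdiff hq0 n hn hρ1, sub_zero]
    -- Iseq for large N
    have hIseqval : ∀ N : ℕ, n < N → Iseq N = 2 * Real.pi * Complex.I * a n := by
      intro N hN
      have hstep : Iseq N = ∮ u in C(0, ρ),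
          ∑ m ∈ Finset.range N, a m * ((F m).eval (Ψ u) * ((u:ℂ) ^ (n+1))⁻¹) := by
        apply circleIntegral.integral_congr hρ0.le
        intro u _
        simp only [hSdef]
        rw [Finset.sum_mul]
        refine Finset.sum_congr rfl fun m _ => ?_
        ring
      have hintm : ∀ m ∈ Finset.range N,
          CircleIntegrable (fun u => a m * ((F m).eval (Ψ u) * ((u:ℂ) ^ (n+1))⁻¹)) 0 ρ := by
        intro m _
        refine (continuousOn_const.mul ((((F m).continuous.comp_continuousOn hΨcontOn)).mul
          hinvcont)).circleIntegrable hρ0.le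
      rw [hstep, circleIntegral_finset_sum _ _ _ _ hintm]
      have : ∀ m ∈ Finset.range N,
          (∮ u in C(0, ρ), a m * ((F m).eval (Ψ u) * ((u:ℂ) ^ (n+1))⁻¹))
            = if m = n then a m * (2 * Real.pi * Complex.I) else 0 := by
        intro m hm
        rw [circleIntegral.integral_const_mul, hval m]
        split_ifs <;> simp
      rw [Finset.sum_congr rfl this, Finset.sum_ite_eq' (Finset.range N) n
        (fun m => a m * (2 * Real.pi * Complex.I)), if_pos (Finset.mem_range.mpr hN)]
      ring
    have hev : ∀ᶠ N in atTop, Iseq N = 2 * Real.pi * Complex.I * a n :=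
      Filter.eventually_atTop.mpr ⟨n + 1, fun N hN => hIseqval N (by omega)⟩
    exact tendsto_nhds_unique htendI ((tendsto_congr' hev).mpr tendsto_const_nhds)
  -- final assembly
  have h1 := reflect R (by linarith) (fun w => f (Ψ w)) n hn
  have h2 := reflect r (by linarith) (fun w => f (Ψ w)) n hn
  rw [h1, h2, hC R hR hRR', hC r hr (by linarith)]
  simp only [map_mul, Complex.conj_I, Complex.conj_ofReal, map_ofNat]
  ring


end
end

section
/- Suppose that for every n ≥ 1 there are nonnegative real numbers α_j^{(n)} (j ≥ 1) such that F_n(Ψ(w)) = wⁿ + ∑_{j≥1} α_j^{(n)} w^{−j} for all |w| > 1, where Ψ := Φ⁻¹ (by Curtiss's theorem this holds whenever K is in the positive class). Then for every n ≥ 1 and every r > 1, ‖F_n‖_K ≥ 1 + ∑_{j≥1} α_j^{(n)} r^{−j}. -/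
open Complex Filter Set Metric

noncomputable section

/-- Lower bound for `‖Fₙ‖_K` when the Faber expansions `Fₙ(Ψ(w)) = wⁿ + ∑_{j≥1} αⱼ⁽ⁿ⁾ w⁻ʲ`
have nonnegative coefficients (which holds, by Curtiss's theorem, whenever `K` is in the
positive class): for every `n ≥ 1` and every `r > 1`, `‖Fₙ‖_K ≥ 1 + ∑_{j≥1} αⱼ⁽ⁿ⁾ r⁻ʲ`. -/
theorem supNorm_faber_ge_of_nonneg_coeffs
    (K : Set ℂ) (Φ : ℂ → ℂ) (γ : ℝ) (F : ℕ → Polynomial ℂ)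
    (hK : IsContinuum K) (hΦ : IsExtRiemannMap K Φ γ) (hF : IsFaberFamily Φ F)
    (Ψ : ℂ → ℂ) (hΨl : ∀ z ∈ Kᶜ, Ψ (Φ z) = z)
    (hΨr : ∀ w : ℂ, 1 < ‖w‖ → Φ (Ψ w) = w)
    (α : ℕ → ℕ → ℝ) (hα : ∀ n j : ℕ, 0 ≤ α n j)
    (hexp : ∀ n : ℕ, 1 ≤ n → ∀ w : ℂ, 1 < ‖w‖ →
      HasSum (fun j : ℕ => (α n (j + 1) : ℂ) / w ^ (j + 1)) ((F n).eval (Ψ w) - w ^ n)) :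
    ∀ n : ℕ, 1 ≤ n → ∀ r : ℝ, 1 < r →
      1 + ∑' j : ℕ, α n (j + 1) / r ^ (j + 1) ≤ supNorm (fun z => (F n).eval z) K := by
  intro n hn r hr
  obtain ⟨hγ, hΦdiff, hΦbij, hΦlim⟩ := hΦ
  -- real form of the expansion
  have key : ∀ s : ℝ, 1 < s →
      HasSum (fun j : ℕ => α n (j + 1) / s ^ (j + 1))
        (((F n).eval (Ψ (s : ℂ)) - (s : ℂ) ^ n).re) := by
    intro s hs
    have habs : 1 < ‖(s : ℂ)‖ := by
      rw [Complex.norm_real, Real.norm_of_nonneg (by linarith)]; exact hs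
    have h := (hexp n hn (s : ℂ) habs).mapL Complex.reCLM
    simp only [Complex.reCLM_apply] at h
    have heq : (fun j : ℕ => α n (j + 1) / s ^ (j + 1)) =
        fun j : ℕ => (((α n (j + 1) : ℝ) : ℂ) / (s : ℂ) ^ (j + 1)).re := by
      funext j
      rw [show ((α n (j + 1) : ℝ) : ℂ) / (s : ℂ) ^ (j + 1)
            = ((α n (j + 1) / s ^ (j + 1) : ℝ) : ℂ) by push_cast; ring, Complex.ofReal_re]
    rw [heq]
    exact h
  have hrsum := key r hr
  set T : ℝ := ∑' j : ℕ, α n (j + 1) / r ^ (j + 1) with hTdef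
  have hTsum : Summable fun j : ℕ => α n (j + 1) / r ^ (j + 1) := hrsum.summable
  -- lower bound on the value along the real axis
  have hlow : ∀ s : ℝ, 1 < s → s ≤ r →
      1 + T ≤ ‖(F n).eval (Ψ (s : ℂ))‖ := by
    intro s hs1 hsr
    have hSsum := key s hs1
    have hterm : ∀ j : ℕ, α n (j + 1) / r ^ (j + 1) ≤ α n (j + 1) / s ^ (j + 1) := by
      intro j
      have hsp : (0 : ℝ) < s ^ (j + 1) := pow_pos (by linarith) _
      gcongr <;> first
        | exact hα n (j + 1)
        | linarith
    have hcomp : T ≤ ∑' j : ℕ, α n (j + 1) / s ^ (j + 1) :=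
      Summable.tsum_le_tsum hterm hTsum hSsum.summable
    have hre : ((F n).eval (Ψ (s : ℂ))).re
        = (∑' j : ℕ, α n (j + 1) / s ^ (j + 1)) + s ^ n := by
      rw [hSsum.tsum_eq]
      simp [Complex.sub_re, ← Complex.ofReal_pow]
    have hs1n : (1 : ℝ) ≤ s ^ n := one_le_pow₀ (le_of_lt hs1)
    have : 1 + T ≤ ((F n).eval (Ψ (s : ℂ))).re := by
      rw [hre]; linarith
    exact this.trans (Complex.re_le_norm _)
  -- sequence approaching the boundary
  set s : ℕ → ℝ := fun k => 1 + (r - 1) / (k + 1) with hsdef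
  have hs1 : ∀ k, 1 < s k := by
    intro k
    have : (0 : ℝ) < (r - 1) / (k + 1) := div_pos (by linarith) (by positivity)
    simp only [hsdef]; linarith
  have hsr : ∀ k, s k ≤ r := by
    intro k
    have hk : (0 : ℝ) ≤ (k : ℝ) := Nat.cast_nonneg k
    have h1 : (1 : ℝ) ≤ (k + 1 : ℝ) := by linarith
    have : (r - 1) / (k + 1) ≤ r - 1 := by
      rw [div_le_iff₀ (by positivity)]
      nlinarith
    simp only [hsdef]; linarith
  have hstend : Tendsto s atTop (nhds 1) := by
    have h0 : Tendsto (fun k : ℕ => (r - 1) * (1 / (k + 1 : ℝ))) atTop (nhds ((r - 1) * 0)) :=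
      tendsto_const_nhds.mul tendsto_one_div_add_atTop_nhds_zero_nat
    have : Tendsto (fun k : ℕ => 1 + (r - 1) * (1 / (k + 1 : ℝ))) atTop (nhds (1 + (r - 1) * 0)) :=
      tendsto_const_nhds.add h0
    simpa [hsdef, mul_one_div, div_eq_mul_inv] using this
  have hΨmem : ∀ w : ℂ, 1 < ‖w‖ → Ψ w ∈ Kᶜ := by
    intro w hw
    obtain ⟨z, hz, hzw⟩ := hΦbij.surjOn (show w ∈ {w : ℂ | 1 < ‖w‖} from hw)
    rw [← hzw, hΨl z hz]; exact hz
  have habs : ∀ k, 1 < ‖((s k : ℝ) : ℂ)‖ := by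
    intro k
    rw [Complex.norm_real, Real.norm_of_nonneg (by linarith [hs1 k])]
    exact hs1 k
  set z : ℕ → ℂ := fun k => Ψ ((s k : ℝ) : ℂ) with hzdef
  have hzmem : ∀ k, z k ∈ Kᶜ := fun k => hΨmem _ (habs k)
  have hΦz : ∀ k, Φ (z k) = ((s k : ℝ) : ℂ) := fun k => hΨr _ (habs k)
  -- boundedness of the sequence
  have hev : {x : ℂ | Φ x / x ∈ Metric.ball (γ : ℂ) (γ / 2)} ∈ Bornology.cobounded ℂ :=
    hΦlim (Metric.ball_mem_nhds _ (by positivity))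
  obtain ⟨R, -, hR⟩ := (Filter.hasBasis_cobounded_norm.mem_iff).1 hev
  have hbig : ∀ x : ℂ, max R 1 ≤ ‖x‖ → γ / 2 * ‖x‖ ≤ ‖Φ x‖ := by
    intro x hx
    have hx1 : (1 : ℝ) ≤ ‖x‖ := le_trans (le_max_right _ _) hx
    have hx0 : x ≠ 0 := by
      intro h; rw [h] at hx1; simp at hx1; linarith
    have hmem : Φ x / x ∈ Metric.ball (γ : ℂ) (γ / 2) := hR (le_trans (le_max_left _ _) hx)
    rw [Metric.mem_ball, dist_eq_norm] at hmem
    have hγn : ‖(γ : ℂ)‖ = γ := by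
      rw [Complex.norm_real, Real.norm_of_nonneg hγ.le]
    have h1 : γ / 2 ≤ ‖Φ x / x‖ := by
      have h2 := norm_sub_norm_le ((γ : ℂ)) (Φ x / x)
      rw [norm_sub_rev] at hmem
      linarith
    have hxn : ‖x‖ ≠ 0 := norm_ne_zero_iff.mpr hx0
    have h3 : ‖Φ x / x‖ * ‖x‖ = ‖Φ x‖ := by rw [norm_div, div_mul_cancel₀ _ hxn]
    rw [← h3]
    exact mul_le_mul_of_nonneg_right h1 (norm_nonneg x)
  set C : ℝ := max (max R 1) (r / (γ / 2)) with hCdef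
  have hzC : ∀ k, z k ∈ Metric.closedBall (0 : ℂ) C := by
    intro k
    rw [Metric.mem_closedBall, dist_zero_right]
    by_cases hcase : max R 1 ≤ ‖z k‖
    · have h1 := hbig (z k) hcase
      rw [hΦz k, Complex.norm_real, Real.norm_of_nonneg (by linarith [hs1 k])] at h1
      have h2 : ‖z k‖ ≤ r / (γ / 2) := by
        rw [le_div_iff₀ (by positivity)]
        calc ‖z k‖ * (γ / 2) = γ / 2 * ‖z k‖ := mul_comm _ _
          _ ≤ s k := h1
          _ ≤ r := hsr k
      exact le_trans h2 (le_max_right _ _)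
    · push_neg at hcase
      exact le_trans hcase.le (le_max_left _ _)
  obtain ⟨z₀, hz₀C, φ, hφmono, hφtend⟩ :=
    (isCompact_closedBall (0 : ℂ) C).tendsto_subseq hzC
  -- the limit point lies in K
  have hz₀K : z₀ ∈ K := by
    by_contra hz₀
    have hopen : IsOpen (Kᶜ : Set ℂ) := hK.1.isClosed.isOpen_compl
    have hcont : ContinuousAt Φ z₀ :=
      (hΦdiff.continuousOn.continuousAt (hopen.mem_nhds hz₀))
    have h1 : Tendsto (fun i => Φ (z (φ i))) atTop (nhds (Φ z₀)) :=
      hcont.tendsto.comp hφtend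
    have h2 : Tendsto (fun i => Φ (z (φ i))) atTop (nhds (1 : ℂ)) := by
      have : Tendsto (fun i => ((s (φ i) : ℝ) : ℂ)) atTop (nhds ((1 : ℝ) : ℂ)) :=
        (Complex.continuous_ofReal.tendsto _).comp (hstend.comp hφmono.tendsto_atTop)
      simpa [hΦz] using this
    have hΦz₀ : Φ z₀ = 1 := tendsto_nhds_unique h1 (by simpa using h2)
    have : Φ z₀ ∈ {w : ℂ | 1 < ‖w‖} := hΦbij.mapsTo hz₀
    rw [hΦz₀] at this
    simp at this
  -- conclude
  have hFcont : Continuous fun w : ℂ => ‖(F n).eval w‖ :=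
    continuous_norm.comp (F n).continuous_aeval
  have htendF : Tendsto (fun i => ‖(F n).eval (z (φ i))‖) atTop
      (nhds ‖(F n).eval z₀‖) :=
    (hFcont.tendsto _).comp hφtend
  have hge : 1 + T ≤ ‖(F n).eval z₀‖ :=
    ge_of_tendsto' htendF fun i => hlow (s (φ i)) (hs1 _) (hsr _)
  have hbdd : BddAbove ((fun w => ‖(F n).eval w‖) '' K) :=
    (hK.1.image hFcont).bddAbove
  exact hge.trans (le_csSup hbdd ⟨z₀, hz₀K, rfl⟩)

end
end

section
/- (Bohr's theorem) Let f be holomorphic on the open unit disk 𝔻 = {z ∈ ℂ : |z| < 1} with Taylor expansion f(z) = ∑_{n≥0} a_n zⁿ on 𝔻. If |f(z)| < 1 for all z ∈ 𝔻, then ∑_{n≥0} |a_n|·|z|ⁿ < 1 for every z with |z| < 1/3. -/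
open Complex Metric

lemma mobius_aux {t u : ℂ} (ht : ‖t‖ < 1) (hu : ‖u‖ < 1) :
    ‖u - t‖ < ‖1 - (starRingEnd ℂ) t * u‖ := by
  have ht' : Complex.normSq t < 1 := by
    rw [← Complex.sq_norm]; nlinarith [norm_nonneg t]
  have hu' : Complex.normSq u < 1 := by
    rw [← Complex.sq_norm]; nlinarith [norm_nonneg u]
  have key : Complex.normSq (u - t) < Complex.normSq (1 - (starRingEnd ℂ) t * u) := by
    simp only [Complex.normSq_apply, Complex.sub_re, Complex.sub_im, Complex.mul_re,
      Complex.mul_im, Complex.one_re, Complex.one_im, Complex.conj_re, Complex.conj_im] at *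
    nlinarith [mul_pos (sub_pos.2 ht') (sub_pos.2 hu')]
  rw [Complex.norm_def, Complex.norm_def]
  exact Real.sqrt_lt_sqrt (Complex.normSq_nonneg _) key

lemma coeff_bound (f : ℂ → ℂ) (a : ℕ → ℂ)
    (ha : ∀ z ∈ ball (0:ℂ) 1, HasSum (fun m : ℕ => a m * z ^ m) (f z))
    (hb : ∀ z ∈ ball (0:ℂ) 1, ‖f z‖ < 1)
    {n : ℕ} (hn : 0 < n) :
    ‖a n‖ ≤ 1 - ‖a 0‖ ^ 2 := by
  have hnne : (n:ℂ) ≠ 0 := Nat.cast_ne_zero.2 hn.ne'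
  have h0mem : (0:ℂ) ∈ ball (0:ℂ) 1 := by simp
  have hf0 : f 0 = a 0 := by
    have h1 : HasSum (fun m : ℕ => a m * (0:ℂ) ^ m) (f 0) := ha 0 h0mem
    have h2 : HasSum (fun m : ℕ => a m * (0:ℂ) ^ m) (a 0) := by
      have he : (fun m : ℕ => a m * (0:ℂ) ^ m) = fun m => if m = 0 then a 0 else 0 := by
        funext m; by_cases h : m = 0 <;> simp [h]
      rw [he]; exact hasSum_ite_eq 0 (a 0)
    exact h1.unique h2
  set t := a 0 with ht_def
  have habs_t : ‖t‖ < 1 := hf0 ▸ hb 0 h0mem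
  set ζ : ℂ := Complex.exp (2 * Real.pi * Complex.I / n) with hζ_def
  have hζ : IsPrimitiveRoot ζ n := Complex.isPrimitiveRoot_exp n hn.ne'
  have hζ1 : ‖ζ‖ = 1 := by
    have h2 : ‖ζ‖ ^ n = 1 := by rw [← norm_pow, hζ.pow_eq_one, norm_one]
    rcases pow_eq_one_iff_cases.1 h2 with h | h | h
    · omega
    · exact h
    · exfalso; nlinarith [norm_nonneg ζ, h.1]
  set F : ℂ → ℂ := fun z => (n:ℂ)⁻¹ * ∑ j ∈ Finset.range n, f (ζ ^ j * z) with hF_def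
  have hmem' : ∀ z ∈ ball (0:ℂ) 1, ∀ j : ℕ, ζ ^ j * z ∈ ball (0:ℂ) 1 := by
    intro z hz j
    simp only [mem_ball, dist_zero_right] at hz ⊢
    rw [norm_mul, norm_pow, hζ1, one_pow, one_mul]; exact hz
  have hFsum : ∀ z ∈ ball (0:ℂ) 1, HasSum (fun k : ℕ => a (n*k) * z ^ (n*k)) (F z) := by
    intro z hz
    have hs : HasSum (fun m : ℕ => ∑ j ∈ Finset.range n, (n:ℂ)⁻¹ * (a m * (ζ ^ j * z) ^ m))
        (∑ j ∈ Finset.range n, (n:ℂ)⁻¹ * f (ζ ^ j * z)) :=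
      hasSum_sum fun j _ => (ha _ (hmem' z hz j)).mul_left _
    have key : ∀ m : ℕ, ∑ j ∈ Finset.range n, (n:ℂ)⁻¹ * (a m * (ζ ^ j * z) ^ m)
        = if n ∣ m then a m * z ^ m else 0 := by
      intro m
      have hsum : ∑ j ∈ Finset.range n, (ζ ^ m) ^ j = if n ∣ m then (n:ℂ) else 0 := by
        by_cases h : n ∣ m
        · have h1 : ζ ^ m = 1 := (hζ.pow_eq_one_iff_dvd m).2 h
          simp [h1, h]
        · have hne : ζ ^ m ≠ 1 := fun he => h ((hζ.pow_eq_one_iff_dvd m).1 he)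
          rw [geom_sum_eq hne]
          have h2 : (ζ ^ m) ^ n = 1 := by
            rw [← pow_mul, mul_comm, pow_mul, hζ.pow_eq_one, one_pow]
          simp [h2, h]
      have hterm : ∀ j : ℕ, (n:ℂ)⁻¹ * (a m * (ζ ^ j * z) ^ m)
          = ((n:ℂ)⁻¹ * (a m * z ^ m)) * (ζ ^ m) ^ j := by
        intro j
        rw [mul_pow, ← pow_mul, mul_comm j m, pow_mul]; ring
      rw [Finset.sum_congr rfl fun j _ => hterm j, ← Finset.mul_sum, hsum]
      by_cases h : n ∣ m
      · simp only [if_pos h]; field_simp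
      · simp [h]
    have hs2 : HasSum (fun m : ℕ => if n ∣ m then a m * z ^ m else 0) (F z) := by
      rw [hF_def]
      simp only
      rw [Finset.mul_sum]
      exact (funext key : _) ▸ hs
    have hinj : Function.Injective (fun k : ℕ => n * k) :=
      fun x y h => Nat.eq_of_mul_eq_mul_left hn h
    have hvan : ∀ m ∉ Set.range (fun k : ℕ => n * k),
        (if n ∣ m then a m * z ^ m else 0) = 0 := by
      intro m hm
      rw [if_neg]
      rintro ⟨c, rfl⟩
      exact hm ⟨c, rfl⟩
    have := (hinj.hasSum_iff hvan).2 hs2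
    refine this.congr_fun fun k => ?_
    simp [Function.comp, Dvd.intro k rfl]
  have hFlt : ∀ z ∈ ball (0:ℂ) 1, ‖F z‖ < 1 := by
    intro z hz
    have hlt : ∀ j ∈ Finset.range n, ‖f (ζ ^ j * z)‖ < 1 :=
      fun j _ => hb _ (hmem' z hz j)
    have hinvpos : (0:ℝ) < (n:ℝ)⁻¹ := by positivity
    calc ‖(n:ℂ)⁻¹ * ∑ j ∈ Finset.range n, f (ζ ^ j * z)‖
        ≤ (n:ℝ)⁻¹ * ∑ j ∈ Finset.range n, ‖f (ζ ^ j * z)‖ := by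
          rw [norm_mul, norm_inv, Complex.norm_natCast]
          exact mul_le_mul_of_nonneg_left (norm_sum_le _ _) hinvpos.le
      _ < (n:ℝ)⁻¹ * (n:ℝ) := by
          refine mul_lt_mul_of_pos_left ?_ hinvpos
          calc ∑ j ∈ Finset.range n, ‖f (ζ ^ j * z)‖
              < ∑ j ∈ Finset.range n, 1 :=
                Finset.sum_lt_sum_of_nonempty (Finset.nonempty_range_iff.2 hn.ne') hlt
            _ = (n:ℝ) := by simp
      _ = 1 := inv_mul_cancel₀ (by positivity)
  set q := FormalMultilinearSeries.ofScalars ℂ (fun k => a (n*k)) with hq_def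
  have hrad : 1 ≤ q.radius := by
    refine ENNReal.le_of_forall_nnreal_lt fun r hr => ?_
    have hr1 : (r:ℝ) < 1 := by exact_mod_cast hr
    set y : ℝ := (r:ℝ) ^ ((n:ℝ)⁻¹) with hy_def
    have hy0 : 0 ≤ y := Real.rpow_nonneg r.coe_nonneg _
    have hyn : y ^ n = (r:ℝ) := by
      rw [hy_def, ← Real.rpow_natCast ((r:ℝ) ^ ((n:ℝ)⁻¹)) n, ← Real.rpow_mul r.coe_nonneg,
        inv_mul_cancel₀ (by positivity : (n:ℝ) ≠ 0), Real.rpow_one]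
    have hy1 : y < 1 := by
      rcases eq_or_lt_of_le r.coe_nonneg with h | h
      · rw [hy_def, ← h, Real.zero_rpow (by positivity)]; norm_num
      · exact Real.rpow_lt_one r.coe_nonneg hr1 (by positivity)
    have hzball : (y:ℂ) ∈ ball (0:ℂ) 1 := by
      simp only [mem_ball, dist_zero_right, Complex.norm_real, Real.norm_eq_abs]
      rwa [_root_.abs_of_nonneg hy0]
    have hsum : Summable fun m : ℕ => ‖a m * (y:ℂ) ^ m‖ :=
      summable_norm_iff.2 (ha _ hzball).summable
    have hsum2 : Summable fun k : ℕ => ‖a (n*k) * (y:ℂ) ^ (n*k)‖ :=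
      hsum.comp_injective fun x y h => Nat.eq_of_mul_eq_mul_left hn h
    apply FormalMultilinearSeries.le_radius_of_summable_norm
    refine hsum2.congr fun k => ?_
    rw [hq_def, FormalMultilinearSeries.ofScalars_norm, norm_mul, norm_pow,
      Complex.norm_real, Real.norm_eq_abs, _root_.abs_of_nonneg hy0, ← hyn, ← pow_mul]
  have hball1 : ∀ w : ℂ, w ∈ ball (0:ℂ) 1 → w ∈ EMetric.ball (0:ℂ) q.radius := by
    intro w hw
    refine EMetric.ball_subset_ball hrad ?_
    rw [← ENNReal.coe_one, Metric.emetric_ball_nnreal]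
    simpa using hw
  have hHsum : ∀ w ∈ ball (0:ℂ) 1, HasSum (fun k : ℕ => a (n*k) * w ^ k) (q.sum w) := by
    intro w hw
    refine (q.hasSum (hball1 w hw)).congr_fun fun k => ?_
    rw [hq_def, FormalMultilinearSeries.ofScalars_apply_eq, smul_eq_mul]
  have hHF : ∀ z ∈ ball (0:ℂ) 1, q.sum (z^n) = F z := by
    intro z hz
    have hz1 : ‖z‖ < 1 := by simpa [mem_ball, dist_zero_right] using hz
    have hzn : z ^ n ∈ ball (0:ℂ) 1 := by
      simp only [mem_ball, dist_zero_right, norm_pow]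
      exact pow_lt_one₀ (norm_nonneg z) hz1 hn.ne'
    have h2 : HasSum (fun k : ℕ => a (n*k) * z ^ (n*k)) (q.sum (z^n)) := by
      refine (hHsum _ hzn).congr_fun fun k => ?_
      rw [← pow_mul]
    exact h2.unique (hFsum z hz)
  have hHmaps : Set.MapsTo q.sum (ball (0:ℂ) 1) (ball (0:ℂ) 1) := by
    intro w hw
    obtain ⟨z, hz⟩ := IsAlgClosed.exists_pow_nat_eq w hn
    have hwabs : ‖w‖ < 1 := by simpa [mem_ball, dist_zero_right] using hw
    have hzb : z ∈ ball (0:ℂ) 1 := by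
      simp only [mem_ball, dist_zero_right]
      by_contra h
      push_neg at h
      have : (1:ℝ) ≤ ‖z‖ ^ n := one_le_pow₀ h
      rw [← norm_pow, hz] at this
      linarith
    rw [← hz, hHF z hzb]
    simpa [mem_ball, dist_zero_right] using hFlt z hzb
  have hHdiff : DifferentiableOn ℂ q.sum (ball (0:ℂ) 1) := by
    have hpos : 0 < q.radius := lt_of_lt_of_le one_pos hrad
    exact (q.hasFPowerSeriesOnBall hpos).differentiableOn.mono fun w hw => hball1 w hw
  have hHderiv : HasDerivAt q.sum (a n) 0 := by
    have hpos : 0 < q.radius := lt_of_lt_of_le one_pos hrad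
    have h := (q.hasFPowerSeriesOnBall hpos).hasFPowerSeriesAt.hasDerivAt
    have he : (q 1 fun _ => (1:ℂ)) = a n := by
      rw [hq_def, FormalMultilinearSeries.ofScalars_apply_eq]
      simp
    rwa [he] at h
  have hH0 : q.sum 0 = t := by
    have h := hHsum 0 (by simp)
    have h2 : HasSum (fun k : ℕ => a (n*k) * (0:ℂ) ^ k) (a 0) := by
      have he : (fun k : ℕ => a (n*k) * (0:ℂ) ^ k) = fun k => if k = 0 then a 0 else 0 := by
        funext k; by_cases h : k = 0 <;> simp [h]
      rw [he]; exact hasSum_ite_eq 0 (a 0)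
    exact h.unique h2
  -- Möbius + Schwarz endgame
  clear_value t
  clear hζ_def hF_def hq_def hf0 ha hb hFsum hFlt hHF
  set H := q.sum with hH_def
  set c := (starRingEnd ℂ) t with hc_def
  have habsH : ∀ w ∈ ball (0:ℂ) 1, ‖H w‖ < 1 := by
    intro w hw
    simpa [mem_ball, dist_zero_right] using hHmaps hw
  have hden : ∀ w ∈ ball (0:ℂ) 1, ‖H w - t‖ < ‖1 - c * H w‖ :=
    fun w hw => mobius_aux habs_t (habsH w hw)
  have hdenpos : ∀ w ∈ ball (0:ℂ) 1, 0 < ‖1 - c * H w‖ :=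
    fun w hw => lt_of_le_of_lt (norm_nonneg _) (hden w hw)
  have hdenne : ∀ w ∈ ball (0:ℂ) 1, (1 - c * H w) ≠ 0 := by
    intro w hw h
    have := hdenpos w hw
    rw [h] at this; simp at this
  set G : ℂ → ℂ := fun w => (H w - t) / (1 - c * H w) with hG_def
  have hGdiff : DifferentiableOn ℂ G (ball (0:ℂ) 1) :=
    (hHdiff.sub_const t).div ((differentiableOn_const 1).sub
      ((differentiableOn_const c).mul hHdiff)) hdenne
  have hGmaps : Set.MapsTo G (ball (0:ℂ) 1) (ball (0:ℂ) 1) := by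
    intro w hw
    simp only [hG_def, mem_ball, dist_zero_right, norm_div]
    rw [div_lt_one (hdenpos w hw)]
    exact hden w hw
  have hG0 : G 0 = 0 := by simp [hG_def, hH0]
  set d : ℂ := 1 - c * t with hd_def
  have hdne : d ≠ 0 := by
    have := hdenne 0 h0mem; rwa [hH0] at this
  have hGderiv : HasDerivAt G (a n * d / d ^ 2) 0 := by
    have hu : HasDerivAt (fun w => H w - t) (a n) 0 := hHderiv.sub_const t
    have hv : HasDerivAt (fun w => 1 - c * H w) (-(c * a n)) 0 := by
      have := (hHderiv.const_mul c).const_sub 1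
      simpa using this
    have := hu.div hv (by rwa [hH0])
    simp only [hH0, sub_self, zero_mul, hd_def] at this ⊢
    rw [show a n * (1 - c * t) / (1 - c * t) ^ 2 = (a n * (1 - c * t) - 0) / (1 - c * t) ^ 2 by ring]
    exact this
  have hschwarz : ‖deriv G 0‖ ≤ 1 :=
    Complex.norm_deriv_le_one_of_mapsTo_ball hGdiff (fun w hw => by rw [hG0]; exact ball_subset_closedBall (hGmaps hw)) one_pos
  rw [hGderiv.deriv] at hschwarz
  have habs_d : ‖d‖ = 1 - ‖t‖ ^ 2 := by
    have he : d = ((1 - Complex.normSq t : ℝ) : ℂ) := by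
      rw [hd_def, hc_def]
      push_cast
      rw [← Complex.mul_conj]
      ring
    rw [he, Complex.norm_real, Real.norm_eq_abs, _root_.abs_of_nonneg, Complex.sq_norm]
    rw [← Complex.sq_norm]
    nlinarith [norm_nonneg t]
  have hexp : ‖a n * d / d ^ 2‖ = ‖a n‖ / ‖d‖ := by
    rw [norm_div, norm_mul, norm_pow]
    have hdpos : 0 < ‖d‖ := norm_pos_iff.2 hdne
    field_simp
  rw [hexp] at hschwarz
  have hdpos : 0 < ‖d‖ := norm_pos_iff.2 hdne
  rw [div_le_one hdpos] at hschwarz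
  rw [← habs_d]
  simpa using hschwarz

/-- Bohr's theorem: if `f = ∑ aₙ zⁿ` is holomorphic on the unit disk with `|f| < 1`, then
`∑ |aₙ||z|ⁿ < 1` for every `|z| < 1/3`. -/
theorem bohr_theorem
    (f : ℂ → ℂ) (a : ℕ → ℂ)
    (hf : DifferentiableOn ℂ f (ball (0 : ℂ) 1))
    (ha : ∀ z ∈ ball (0 : ℂ) 1, HasSum (fun n : ℕ => a n * z ^ n) (f z))
    (hb : ∀ z ∈ ball (0 : ℂ) 1, ‖f z‖ < 1) :
    ∀ z : ℂ, ‖z‖ < 1 / 3 →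
      Summable (fun n : ℕ => ‖a n‖ * ‖z‖ ^ n) ∧
        ∑' n : ℕ, ‖a n‖ * ‖z‖ ^ n < 1 := by
  have h0mem : (0:ℂ) ∈ ball (0:ℂ) 1 := by simp
  have hf0 : f 0 = a 0 := by
    have h1 : HasSum (fun m : ℕ => a m * (0:ℂ) ^ m) (f 0) := ha 0 h0mem
    have h2 : HasSum (fun m : ℕ => a m * (0:ℂ) ^ m) (a 0) := by
      have he : (fun m : ℕ => a m * (0:ℂ) ^ m) = fun m => if m = 0 then a 0 else 0 := by
        funext m; by_cases h : m = 0 <;> simp [h]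
      rw [he]; exact hasSum_ite_eq 0 (a 0)
    exact h1.unique h2
  have habs0 : ‖a 0‖ < 1 := hf0 ▸ hb 0 h0mem
  have cb : ∀ {n : ℕ}, 0 < n → ‖a n‖ ≤ 1 - ‖a 0‖ ^ 2 :=
    fun {n} hn => coeff_bound f a ha hb hn
  intro z hz
  set r : ℝ := ‖z‖ with hr_def
  have hr0 : 0 ≤ r := norm_nonneg z
  have hr1 : r < 1 := by linarith
  set t : ℝ := ‖a 0‖ with ht_def
  have ht0 : 0 ≤ t := norm_nonneg _
  set B : ℝ := 1 - t ^ 2 with hB_def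
  have hB0 : 0 ≤ B := by nlinarith
  have hgeom : Summable fun n : ℕ => r ^ n := summable_geometric_of_lt_one hr0 hr1
  have hle : ∀ n : ℕ, ‖a n‖ * r ^ n ≤ (t + B) * r ^ n := by
    intro n
    rcases Nat.eq_zero_or_pos n with h | h
    · subst h; simp; nlinarith
    · have := cb h
      have hrn : (0:ℝ) ≤ r ^ n := by positivity
      nlinarith
  have hsummable : Summable fun n : ℕ => ‖a n‖ * r ^ n :=
    Summable.of_nonneg_of_le (fun n => by positivity) hle (hgeom.mul_left _)
  refine ⟨hsummable, ?_⟩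
  rw [hsummable.tsum_eq_zero_add]
  have htail : ∑' k : ℕ, ‖a (k+1)‖ * r ^ (k+1) ≤ B * r / (1 - r) := by
    have hb2 : ∀ k : ℕ, ‖a (k+1)‖ * r ^ (k+1) ≤ (B * r) * r ^ k := by
      intro k
      have h1 := cb (Nat.succ_pos k)
      calc ‖a (k+1)‖ * r ^ (k+1) ≤ B * r ^ (k+1) :=
            mul_le_mul_of_nonneg_right h1 (by positivity)
        _ = (B * r) * r ^ k := by ring
    have hsum1 : Summable fun k : ℕ => ‖a (k+1)‖ * r ^ (k+1) :=
      (summable_nat_add_iff (f := fun n : ℕ => ‖a n‖ * r ^ n) 1).2 hsummable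
    calc ∑' k : ℕ, ‖a (k+1)‖ * r ^ (k+1)
        ≤ ∑' k : ℕ, (B * r) * r ^ k := Summable.tsum_le_tsum hb2 hsum1 (hgeom.mul_left _)
      _ = (B * r) * (1 - r)⁻¹ := by rw [tsum_mul_left, tsum_geometric_of_lt_one hr0 hr1]
      _ = B * r / (1 - r) := by ring
  have hfrac : B * r / (1 - r) ≤ B / 2 := by
    rw [div_le_div_iff₀ (by linarith) (by norm_num)]
    nlinarith
  have h00 : ‖a 0‖ * r ^ 0 = t := by simp [ht_def]
  rw [h00]
  have ht1 : t < 1 := habs0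
  nlinarith
end

section
/- (Sharpness of Bohr's radius 1/3) For every ε with 0 < ε < 2/3 there exist a holomorphic function f on the open unit disk 𝔻 with |f(z)| < 1 for all z ∈ 𝔻, with Taylor expansion f(z) = ∑_{n≥0} a_n zⁿ, and a point z ∈ ℂ with |z| = 1/3 + ε, such that ∑_{n≥0} |a_n|·|z|ⁿ > 1. -/
open Complex Metric

private def bohrCoef (r : ℝ) : ℕ → ℂ
  | 0 => (r : ℂ)
  | (m + 1) => -(1 - (r : ℂ) ^ 2) * (r : ℂ) ^ m

private lemma bohrCoef_zero (r : ℝ) : bohrCoef r 0 = (r : ℂ) := rfl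
private lemma bohrCoef_succ (r : ℝ) (m : ℕ) :
    bohrCoef r (m + 1) = -(1 - (r : ℂ) ^ 2) * (r : ℂ) ^ m := rfl

set_option maxHeartbeats 1000000 in
private lemma bohr_aux (r t : ℝ) (hr0 : 0 < r) (hr1 : r < 1) (ht0 : 0 < t) (ht1 : t < 1)
    (hcond : 1 < t * (1 + 2 * r)) :
    ∃ (f : ℂ → ℂ) (a : ℕ → ℂ) (z : ℂ),
      DifferentiableOn ℂ f (ball (0 : ℂ) 1) ∧
      (∀ w ∈ ball (0 : ℂ) 1, HasSum (fun n : ℕ => a n * w ^ n) (f w)) ∧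
      (∀ w ∈ ball (0 : ℂ) 1, ‖f w‖ < 1) ∧
      ‖z‖ = t ∧
      1 < ∑' n : ℕ, ‖a n‖ * ‖z‖ ^ n := by
  have hrt1 : r * t < 1 := by nlinarith
  have hden : ∀ w ∈ ball (0 : ℂ) 1, (1 : ℂ) - (r : ℂ) * w ≠ 0 := by
    intro w hw h
    have hwabs : ‖w‖ < 1 := by simpa [mem_ball, dist_eq] using hw
    have h1 : (r : ℂ) * w = 1 := by linear_combination -h
    have h2 := congrArg norm h1
    rw [norm_mul, norm_one, Complex.norm_real, Real.norm_of_nonneg hr0.le] at h2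
    nlinarith [norm_nonneg w]
  refine ⟨fun w => ((r : ℂ) - w) / (1 - (r : ℂ) * w), bohrCoef r, (t : ℂ), ?_, ?_, ?_, ?_, ?_⟩
  · exact DifferentiableOn.div (by fun_prop) (by fun_prop) hden
  · intro w hw
    have hwabs : ‖w‖ < 1 := by simpa [mem_ball, dist_eq] using hw
    have hnorm : ‖(r : ℂ) * w‖ < 1 := by
      rw [norm_mul, Complex.norm_real, Real.norm_of_nonneg hr0.le]
      calc r * ‖w‖ ≤ 1 * ‖w‖ := mul_le_mul_of_nonneg_right hr1.le (norm_nonneg _)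
        _ < 1 := by simpa using hwabs
    have hG := hasSum_geometric_of_norm_lt_one hnorm
    have h1 : HasSum (fun n : ℕ => bohrCoef r (n + 1) * w ^ (n + 1))
        (-(1 - (r : ℂ) ^ 2) * w * (1 - (r : ℂ) * w)⁻¹) := by
      have heq : (fun n : ℕ => bohrCoef r (n + 1) * w ^ (n + 1))
          = fun n : ℕ => (-(1 - (r : ℂ) ^ 2) * w) * ((r : ℂ) * w) ^ n := by
        funext n
        rw [bohrCoef_succ, mul_pow, pow_succ]
        ring
      rw [heq]
      exact hG.mul_left _
    have h2 := (hasSum_nat_add_iff (f := fun n : ℕ => bohrCoef r n * w ^ n) 1).mp h1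
    have hd := hden w hw
    have hval : -(1 - (r : ℂ) ^ 2) * w * (1 - (r : ℂ) * w)⁻¹
        + ∑ i ∈ Finset.range 1, bohrCoef r i * w ^ i
        = ((r : ℂ) - w) / (1 - (r : ℂ) * w) := by
      rw [Finset.sum_range_one, bohrCoef_zero, pow_zero, mul_one]
      field_simp
      ring
    rw [hval] at h2
    exact h2
  · intro w hw
    have hwabs : ‖w‖ < 1 := by simpa [mem_ball, dist_eq] using hw
    have hd := hden w hw
    rw [norm_div, div_lt_one (norm_pos_iff.mpr hd)]
    have hw2 : w.re ^ 2 + w.im ^ 2 < 1 := by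
      have h := Complex.sq_norm w
      rw [Complex.normSq_apply] at h
      nlinarith [norm_nonneg w]
    have hsq : Complex.normSq ((r : ℂ) - w) < Complex.normSq (1 - (r : ℂ) * w) := by
      have hr2 : (0 : ℝ) < 1 - r ^ 2 := by nlinarith
      simp only [Complex.normSq_apply, Complex.sub_re, Complex.sub_im, Complex.mul_re,
        Complex.mul_im, Complex.ofReal_re, Complex.ofReal_im, Complex.one_re, Complex.one_im]
      nlinarith [mul_pos hr2 (by linarith : (0:ℝ) < 1 - (w.re ^ 2 + w.im ^ 2))]
    rw [Complex.norm_def, Complex.norm_def]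
    exact Real.sqrt_lt_sqrt (Complex.normSq_nonneg _) hsq
  · rw [Complex.norm_real, Real.norm_of_nonneg ht0.le]
  · rw [Complex.norm_real, Real.norm_of_nonneg ht0.le]
    have hr2 : (0 : ℝ) < 1 - r ^ 2 := by nlinarith
    have hG := hasSum_geometric_of_lt_one (by positivity) hrt1
    have h1 : HasSum (fun n : ℕ => ‖bohrCoef r (n + 1)‖ * t ^ (n + 1))
        ((1 - r ^ 2) * t * (1 - r * t)⁻¹) := by
      have heq : (fun n : ℕ => ‖bohrCoef r (n + 1)‖ * t ^ (n + 1))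
          = fun n : ℕ => ((1 - r ^ 2) * t) * (r * t) ^ n := by
        funext n
        rw [bohrCoef_succ, norm_mul, norm_neg, norm_pow, Complex.norm_real,
          Real.norm_of_nonneg hr0.le]
        have habs : ‖1 - (r : ℂ) ^ 2‖ = 1 - r ^ 2 := by
          rw [show (1 : ℂ) - (r : ℂ) ^ 2 = ((1 - r ^ 2 : ℝ) : ℂ) by push_cast; ring,
            Complex.norm_real, Real.norm_of_nonneg hr2.le]
        rw [habs, mul_pow, pow_succ]
        ring
      rw [heq]
      exact hG.mul_left _
    have h2 := (hasSum_nat_add_iff (f := fun n : ℕ => ‖bohrCoef r n‖ * t ^ n) 1).mp h1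
    rw [h2.tsum_eq, Finset.sum_range_one, pow_zero, mul_one, bohrCoef_zero,
      Complex.norm_real, Real.norm_of_nonneg hr0.le]
    set u : ℝ := (1 - r * t)⁻¹ with hu_def
    have hu0 : 0 < u := inv_pos.mpr (by linarith)
    have hu1 : u * (1 - r * t) = 1 := inv_mul_cancel₀ (by linarith)
    nlinarith [mul_pos (mul_pos (sub_pos.mpr hr1)
      (by linarith : (0:ℝ) < t * (1 + 2 * r) - 1)) hu0]

/-- Sharpness of Bohr's radius `1/3`: for every `0 < ε < 2/3` there are a holomorphic
`f : 𝔻 → 𝔻` with Taylor coefficients `(aₙ)` and a point `z` with `|z| = 1/3 + ε` such that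
`∑ |aₙ||z|ⁿ > 1`. -/
theorem bohr_radius_sharp
    (ε : ℝ) (hε : 0 < ε) (hε' : ε < 2 / 3) :
    ∃ (f : ℂ → ℂ) (a : ℕ → ℂ) (z : ℂ),
      DifferentiableOn ℂ f (ball (0 : ℂ) 1) ∧
      (∀ w ∈ ball (0 : ℂ) 1, HasSum (fun n : ℕ => a n * w ^ n) (f w)) ∧
      (∀ w ∈ ball (0 : ℂ) 1, ‖f w‖ < 1) ∧
      ‖z‖ = 1 / 3 + ε ∧
      1 < ∑' n : ℕ, ‖a n‖ * ‖z‖ ^ n := by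
  have ht0 : (0 : ℝ) < 1 / 3 + ε := by linarith
  have ht1 : 1 / 3 + ε < 1 := by linarith
  obtain ⟨r, hr0, hr1, hcond⟩ :
      ∃ r : ℝ, 0 < r ∧ r < 1 ∧ 1 < (1 / 3 + ε) * (1 + 2 * r) := by
    refine ⟨((1 / (1 / 3 + ε) - 1) / 2 + 1) / 2, ?_, ?_, ?_⟩
    · have : 1 < 1 / (1 / 3 + ε) := by rw [lt_div_iff₀ ht0]; linarith
      linarith
    · have : 1 / (1 / 3 + ε) < 3 := by rw [div_lt_iff₀ ht0]; linarith
      linarith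
    · have hinv : (1 / 3 + ε) * (1 / (1 / 3 + ε)) = 1 := mul_one_div_cancel ht0.ne'
      nlinarith
  exact bohr_aux r (1 / 3 + ε) hr0 hr1 ht0 ht1 hcond
end
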